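/- Let K be a commutative associative unital ring with the identity involution and let a, b, c be invertible elements of K. Let R = (((K,a),b),c) be the ring obtained by applying the Cayley–Dickson process three times, where at each step the involution is the one induced by (x,y)* = (x*,−y). Then R is non-associative and centrally essential if and only if the ideal Ann_K(2) = {x ∈ K : 2x = 0} is an essential ideal of K and Ann_K(2) ≠ K. -/

import Mathlib

set_option linter.unusedSectionVars false

/-- The associator `(a,b,c) = (ab)c - a(bc)` in a not necessarily associative ring. -/
def naAssociator {R : Type*} [NonAssocRing R] (a b c : R) : R := a * b * c - a * (b * c)

/-- The commutator `[a,b] = ab - ba` in a not necessarily associative ring. -/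
def naCommutator {R : Type*} [NonAssocRing R] (a b : R) : R := a * b - b * a

/-- The associative center `N(R)`. -/
def assocCenter (R : Type*) [NonAssocRing R] : Set R :=
  {x | ∀ a b : R, naAssociator x a b = 0 ∧ naAssociator a x b = 0 ∧ naAssociator a b x = 0}

/-- The commutative center `K(R)`. -/
def commCenter (R : Type*) [NonAssocRing R] : Set R :=
  {x | ∀ a : R, naCommutator x a = 0}

/-- The center `Z(R) = N(R) ∩ K(R)`. -/
def ringCenter (R : Type*) [NonAssocRing R] : Set R :=
  assocCenter R ∩ commCenter R

/-- A ring is centrally essential if for every nonzero `r` there is a central `z`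
with `z * r ≠ 0` central. -/
def IsCentrallyEssential (R : Type*) [NonAssocRing R] : Prop :=
  ∀ r : R, r ≠ 0 → ∃ z ∈ ringCenter R, z * r ≠ 0 ∧ z * r ∈ ringCenter R

/-- A ring is left `N`-essential. -/
def IsLeftNEssential (R : Type*) [NonAssocRing R] : Prop :=
  ∀ r : R, r ≠ 0 → ∃ n ∈ assocCenter R, n * r ≠ 0 ∧ n * r ∈ assocCenter R

/-- A ring is right `N`-essential. -/
def IsRightNEssential (R : Type*) [NonAssocRing R] : Prop :=
  ∀ r : R, r ≠ 0 → ∃ n ∈ assocCenter R, r * n ≠ 0 ∧ r * n ∈ assocCenter R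

/-- `I` is an essential ideal of `B` (elementwise formulation). -/
def EssentialIn {R : Type*} [NonAssocRing R] (I B : Set R) : Prop :=
  ∀ b ∈ B, b ≠ 0 → ∃ d ∈ B, d * b ≠ 0 ∧ d * b ∈ I

/-- The Cayley–Dickson ring `(A, α)`: the abelian group `A ⊕ A` with multiplication
`(a₁,a₂)(a₃,a₄) = (a₁a₃ + α(a₄a₂*), a₁*a₄ + a₃a₂)`. -/
@[ext]
structure CD (A : Type*) (α : A) : Type _ where
  re : A
  im : A

namespace CD

variable {A : Type*} [NonAssocRing A] [StarRing A] {α : A}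

instance : Zero (CD A α) := ⟨⟨0, 0⟩⟩
instance : Add (CD A α) := ⟨fun z w => ⟨z.re + w.re, z.im + w.im⟩⟩
instance : Neg (CD A α) := ⟨fun z => ⟨-z.re, -z.im⟩⟩
instance : One (CD A α) := ⟨⟨1, 0⟩⟩
instance : Mul (CD A α) :=
  ⟨fun z w => ⟨z.re * w.re + α * (w.im * star z.im), star z.re * w.im + w.re * z.im⟩⟩
instance : Star (CD A α) := ⟨fun z => ⟨star z.re, -z.im⟩⟩

@[simp] theorem zero_re : (0 : CD A α).re = 0 := rfl
@[simp] theorem zero_im : (0 : CD A α).im = 0 := rfl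
@[simp] theorem one_re : (1 : CD A α).re = 1 := rfl
@[simp] theorem one_im : (1 : CD A α).im = 0 := rfl
@[simp] theorem add_re (z w : CD A α) : (z + w).re = z.re + w.re := rfl
@[simp] theorem add_im (z w : CD A α) : (z + w).im = z.im + w.im := rfl
@[simp] theorem neg_re (z : CD A α) : (-z).re = -z.re := rfl
@[simp] theorem neg_im (z : CD A α) : (-z).im = -z.im := rfl
@[simp] theorem mul_re (z w : CD A α) :
    (z * w).re = z.re * w.re + α * (w.im * star z.im) := rfl
@[simp] theorem mul_im (z w : CD A α) :
    (z * w).im = star z.re * w.im + w.re * z.im := rfl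
@[simp] theorem star_re (z : CD A α) : (star z).re = star z.re := rfl
@[simp] theorem star_im (z : CD A α) : (star z).im = -z.im := rfl
@[simp] theorem mk_re (x y : A) : (⟨x, y⟩ : CD A α).re = x := rfl
@[simp] theorem mk_im (x y : A) : (⟨x, y⟩ : CD A α).im = y := rfl

instance : NonAssocRing (CD A α) where
  add_assoc a b c := by ext <;> simp [add_assoc]
  zero_add a := by ext <;> simp
  add_zero a := by ext <;> simp
  add_comm a b := by ext <;> simp [add_comm]
  neg_add_cancel a := by ext <;> simp
  nsmul := nsmulRec
  zsmul := zsmulRec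
  left_distrib a b c := by ext <;> simp [mul_add, add_mul] <;> abel
  right_distrib a b c := by ext <;> simp [mul_add, add_mul, star_add] <;> abel
  zero_mul a := by ext <;> simp
  mul_zero a := by ext <;> simp
  one_mul a := by ext <;> simp
  mul_one a := by ext <;> simp

instance {A : Type*} {α : A} [Finite A] : Finite (CD A α) :=
  Finite.of_injective (fun z : CD A α => (z.re, z.im))
    (fun z w h => by cases z; cases w; simpa using h)

/-- If `α` commutes with every element and `star α = α`, then `(a,b) ↦ (a*, -b)`
makes `(A, α)` a star ring. -/
def starRing (h : ∀ t : A, α * t = t * α) (hs : star α = α) : StarRing (CD A α) where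
  star := star
  star_involutive z := by ext <;> simp
  star_mul z w := by
    ext <;>
      simp [StarMul.star_mul, star_star, StarAddMonoid.star_add, star_neg, hs, h, mul_neg, neg_mul,
        neg_add] <;>
      abel
  star_add z w := by ext <;> simp [StarAddMonoid.star_add, neg_add] <;> abel

/-- An element of the form `(x, 0)` with `x` commuting with everything and `star x = x`
commutes with every element of `(A, α)`. -/
theorem mk_zero_comm {x : A} (hx : ∀ t : A, x * t = t * x) (hsx : star x = x) (z : CD A α) :
    (⟨x, 0⟩ : CD A α) * z = z * ⟨x, 0⟩ := by
  ext <;> simp [hsx, hx]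

end CD


attribute [reducible] CD.starRing

section Aux
variable {K : Type*} [CommRing K] [StarRing K] [TrivialStar K]

local instance i1 {a : K} : StarRing (CD K a) := CD.starRing (fun t => mul_comm a t) (star_trivial a)
local instance i2 {a b : K} : StarRing (CD (CD K a) ⟨b, 0⟩) :=
  CD.starRing (CD.mk_zero_comm (fun t => mul_comm b t) (star_trivial b)) (by ext <;> simp)

def mk8 (a b c x0 x1 x2 x3 x4 x5 x6 x7 : K) : CD (CD (CD K a) ⟨b, 0⟩) ⟨⟨c, 0⟩, 0⟩ :=
  ⟨⟨⟨x0, x1⟩, ⟨x2, x3⟩⟩, ⟨⟨x4, x5⟩, ⟨x6, x7⟩⟩⟩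

set_option maxHeartbeats 3200000 in
theorem lemB (a b c z0 z1 z2 z3 z4 z5 z6 z7 : K)
    (h1 : 2 * z1 = 0) (h2 : 2 * z2 = 0) (h3 : 2 * z3 = 0) (h4 : 2 * z4 = 0)
    (h5 : 2 * z5 = 0) (h6 : 2 * z6 = 0) (h7 : 2 * z7 = 0) :
    mk8 a b c z0 z1 z2 z3 z4 z5 z6 z7 ∈
      ringCenter (CD (CD (CD K a) ⟨b, 0⟩) ⟨⟨c, 0⟩, 0⟩) := by
  constructor
  · rintro ⟨⟨⟨u0,u1⟩,⟨u2,u3⟩⟩,⟨⟨u4,u5⟩,⟨u6,u7⟩⟩⟩ ⟨⟨⟨v0,v1⟩,⟨v2,v3⟩⟩,⟨⟨v4,v5⟩,⟨v6,v7⟩⟩⟩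
    refine ⟨?_, ?_, ?_⟩
    · ext
      · simp only [naAssociator, naCommutator, mk8, sub_eq_add_neg, CD.mul_re, CD.mul_im, CD.add_re, CD.add_im, CD.neg_re, CD.neg_im, CD.star_re, CD.star_im, CD.mk_re, CD.mk_im, CD.zero_re, CD.zero_im, star_trivial, neg_neg, mul_neg, neg_mul]
        ring
      · simp only [naAssociator, naCommutator, mk8, sub_eq_add_neg, CD.mul_re, CD.mul_im, CD.add_re, CD.add_im, CD.neg_re, CD.neg_im, CD.star_re, CD.star_im, CD.mk_re, CD.mk_im, CD.zero_re, CD.zero_im, star_trivial, neg_neg, mul_neg, neg_mul]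
        linear_combination ((-1)*b*c*u4*v7 + b*c*u5*v6 + (-1)*b*c*u6*v5 + b*c*u7*v4) * h2 + ((-1)*a*b*c*u5*v7 + a*b*c*u7*v5 + b*c*u4*v6 + (-1)*b*c*u6*v4) * h3 + (b*c*u2*v7 + (-1)*b*c*u3*v6 + b*c*u6*v3 + (-1)*b*c*u7*v2) * h4 + (a*b*c*u3*v7 + (-1)*a*b*c*u7*v3 + (-1)*b*c*u2*v6 + b*c*u6*v2) * h5 + (b*c*u2*v5 + b*c*u3*v4 + (-1)*b*c*u4*v3 + (-1)*b*c*u5*v2) * h6 + ((-1)*a*b*c*u3*v5 + a*b*c*u5*v3 + (-1)*b*c*u2*v4 + b*c*u4*v2) * h7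
      · simp only [naAssociator, naCommutator, mk8, sub_eq_add_neg, CD.mul_re, CD.mul_im, CD.add_re, CD.add_im, CD.neg_re, CD.neg_im, CD.star_re, CD.star_im, CD.mk_re, CD.mk_im, CD.zero_re, CD.zero_im, star_trivial, neg_neg, mul_neg, neg_mul]
        linear_combination (a*c*u4*v7 + (-1)*a*c*u5*v6 + a*c*u6*v5 + (-1)*a*c*u7*v4) * h1 + ((-1)*a*b*c*u6*v7 + a*b*c*u7*v6 + (-1)*a*c*u4*v5 + a*c*u5*v4) * h3 + ((-1)*a*c*u1*v7 + a*c*u3*v5 + (-1)*a*c*u5*v3 + a*c*u7*v1) * h4 + (a*c*u1*v6 + (-1)*a*c*u3*v4 + a*c*u4*v3 + (-1)*a*c*u6*v1) * h5 + (a*b*c*u3*v7 + (-1)*a*b*c*u7*v3 + (-1)*a*c*u1*v5 + a*c*u5*v1) * h6 + ((-1)*a*b*c*u3*v6 + a*b*c*u6*v3 + a*c*u1*v4 + (-1)*a*c*u4*v1) * h7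
      · simp only [naAssociator, naCommutator, mk8, sub_eq_add_neg, CD.mul_re, CD.mul_im, CD.add_re, CD.add_im, CD.neg_re, CD.neg_im, CD.star_re, CD.star_im, CD.mk_re, CD.mk_im, CD.zero_re, CD.zero_im, star_trivial, neg_neg, mul_neg, neg_mul]
        linear_combination ((-1)*a*c*u5*v7 + a*c*u7*v5 + c*u4*v6 + (-1)*c*u6*v4) * h1 + ((-1)*b*c*u6*v7 + b*c*u7*v6 + (-1)*c*u4*v5 + c*u5*v4) * h2 + ((-1)*c*u1*v6 + c*u2*v5 + (-1)*c*u5*v2 + c*u6*v1) * h4 + (a*c*u1*v7 + (-1)*a*c*u7*v1 + (-1)*c*u2*v4 + c*u4*v2) * h5 + (b*c*u2*v7 + (-1)*b*c*u7*v2 + c*u1*v4 + (-1)*c*u4*v1) * h6 + ((-1)*a*c*u1*v5 + a*c*u5*v1 + (-1)*b*c*u2*v6 + b*c*u6*v2) * h7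
      · simp only [naAssociator, naCommutator, mk8, sub_eq_add_neg, CD.mul_re, CD.mul_im, CD.add_re, CD.add_im, CD.neg_re, CD.neg_im, CD.star_re, CD.star_im, CD.mk_re, CD.mk_im, CD.zero_re, CD.zero_im, star_trivial, neg_neg, mul_neg, neg_mul]
        linear_combination ((-1)*a*b*u2*v7 + a*b*u3*v6 + (-1)*a*b*u6*v3 + a*b*u7*v2) * h1 + (a*b*u1*v7 + (-1)*a*b*u3*v5 + a*b*u5*v3 + (-1)*a*b*u7*v1) * h2 + ((-1)*a*b*u1*v6 + a*b*u2*v5 + (-1)*a*b*u5*v2 + a*b*u6*v1) * h3 + ((-1)*a*b*c*u6*v7 + a*b*c*u7*v6 + (-1)*a*b*u2*v3 + a*b*u3*v2) * h5 + (a*b*c*u5*v7 + (-1)*a*b*c*u7*v5 + a*b*u1*v3 + (-1)*a*b*u3*v1) * h6 + ((-1)*a*b*c*u5*v6 + a*b*c*u6*v5 + (-1)*a*b*u1*v2 + a*b*u2*v1) * h7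
      · simp only [naAssociator, naCommutator, mk8, sub_eq_add_neg, CD.mul_re, CD.mul_im, CD.add_re, CD.add_im, CD.neg_re, CD.neg_im, CD.star_re, CD.star_im, CD.mk_re, CD.mk_im, CD.zero_re, CD.zero_im, star_trivial, neg_neg, mul_neg, neg_mul]
        linear_combination (a*b*u3*v7 + (-1)*a*b*u7*v3 + (-1)*b*u2*v6 + b*u6*v2) * h1 + (b*u1*v6 + (-1)*b*u3*v4 + b*u4*v3 + (-1)*b*u6*v1) * h2 + ((-1)*a*b*u1*v7 + a*b*u7*v1 + b*u2*v4 + (-1)*b*u4*v2) * h3 + ((-1)*b*c*u6*v7 + b*c*u7*v6 + (-1)*b*u2*v3 + b*u3*v2) * h4 + (b*c*u4*v7 + (-1)*b*c*u7*v4 + (-1)*b*u1*v2 + b*u2*v1) * h6 + (a*b*u1*v3 + (-1)*a*b*u3*v1 + (-1)*b*c*u4*v6 + b*c*u6*v4) * h7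
      · simp only [naAssociator, naCommutator, mk8, sub_eq_add_neg, CD.mul_re, CD.mul_im, CD.add_re, CD.add_im, CD.neg_re, CD.neg_im, CD.star_re, CD.star_im, CD.mk_re, CD.mk_im, CD.zero_re, CD.zero_im, star_trivial, neg_neg, mul_neg, neg_mul]
        linear_combination (a*u2*v5 + a*u3*v4 + (-1)*a*u4*v3 + (-1)*a*u5*v2) * h1 + (a*b*u3*v7 + (-1)*a*b*u7*v3 + (-1)*a*u1*v5 + a*u5*v1) * h2 + ((-1)*a*b*u2*v7 + a*b*u7*v2 + (-1)*a*u1*v4 + a*u4*v1) * h3 + (a*c*u5*v7 + (-1)*a*c*u7*v5 + a*u1*v3 + (-1)*a*u3*v1) * h4 + ((-1)*a*c*u4*v7 + a*c*u7*v4 + a*u1*v2 + (-1)*a*u2*v1) * h5 + (a*b*u2*v3 + (-1)*a*b*u3*v2 + a*c*u4*v5 + (-1)*a*c*u5*v4) * h7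
      · simp only [naAssociator, naCommutator, mk8, sub_eq_add_neg, CD.mul_re, CD.mul_im, CD.add_re, CD.add_im, CD.neg_re, CD.neg_im, CD.star_re, CD.star_im, CD.mk_re, CD.mk_im, CD.zero_re, CD.zero_im, star_trivial, neg_neg, mul_neg, neg_mul]
        linear_combination (a*u3*v5 + (-1)*a*u5*v3 + u2*v4 + (-1)*u4*v2) * h1 + (b*u3*v6 + (-1)*b*u6*v3 + (-1)*u1*v4 + u4*v1) * h2 + ((-1)*a*u1*v5 + a*u5*v1 + (-1)*b*u2*v6 + b*u6*v2) * h3 + (c*u5*v6 + (-1)*c*u6*v5 + u1*v2 + (-1)*u2*v1) * h4 + (a*u1*v3 + (-1)*a*u3*v1 + (-1)*c*u4*v6 + c*u6*v4) * h5 + (b*u2*v3 + (-1)*b*u3*v2 + c*u4*v5 + (-1)*c*u5*v4) * h6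
    · ext
      · simp only [naAssociator, naCommutator, mk8, sub_eq_add_neg, CD.mul_re, CD.mul_im, CD.add_re, CD.add_im, CD.neg_re, CD.neg_im, CD.star_re, CD.star_im, CD.mk_re, CD.mk_im, CD.zero_re, CD.zero_im, star_trivial, neg_neg, mul_neg, neg_mul]
        ring
      · simp only [naAssociator, naCommutator, mk8, sub_eq_add_neg, CD.mul_re, CD.mul_im, CD.add_re, CD.add_im, CD.neg_re, CD.neg_im, CD.star_re, CD.star_im, CD.mk_re, CD.mk_im, CD.zero_re, CD.zero_im, star_trivial, neg_neg, mul_neg, neg_mul]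
        linear_combination (b*c*u4*v7 + (-1)*b*c*u5*v6 + b*c*u6*v5 + (-1)*b*c*u7*v4) * h2 + (a*b*c*u5*v7 + (-1)*a*b*c*u7*v5 + (-1)*b*c*u4*v6 + b*c*u6*v4) * h3 + ((-1)*b*c*u2*v7 + b*c*u3*v6 + (-1)*b*c*u6*v3 + b*c*u7*v2) * h4 + ((-1)*a*b*c*u3*v7 + a*b*c*u7*v3 + b*c*u2*v6 + (-1)*b*c*u6*v2) * h5 + ((-1)*b*c*u2*v5 + (-1)*b*c*u3*v4 + b*c*u4*v3 + b*c*u5*v2) * h6 + (a*b*c*u3*v5 + (-1)*a*b*c*u5*v3 + b*c*u2*v4 + (-1)*b*c*u4*v2) * h7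
      · simp only [naAssociator, naCommutator, mk8, sub_eq_add_neg, CD.mul_re, CD.mul_im, CD.add_re, CD.add_im, CD.neg_re, CD.neg_im, CD.star_re, CD.star_im, CD.mk_re, CD.mk_im, CD.zero_re, CD.zero_im, star_trivial, neg_neg, mul_neg, neg_mul]
        linear_combination ((-1)*a*c*u4*v7 + a*c*u5*v6 + (-1)*a*c*u6*v5 + a*c*u7*v4) * h1 + (a*b*c*u6*v7 + (-1)*a*b*c*u7*v6 + a*c*u4*v5 + (-1)*a*c*u5*v4) * h3 + (a*c*u1*v7 + (-1)*a*c*u3*v5 + a*c*u5*v3 + (-1)*a*c*u7*v1) * h4 + ((-1)*a*c*u1*v6 + a*c*u3*v4 + (-1)*a*c*u4*v3 + a*c*u6*v1) * h5 + ((-1)*a*b*c*u3*v7 + a*b*c*u7*v3 + a*c*u1*v5 + (-1)*a*c*u5*v1) * h6 + (a*b*c*u3*v6 + (-1)*a*b*c*u6*v3 + (-1)*a*c*u1*v4 + a*c*u4*v1) * h7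
      · simp only [naAssociator, naCommutator, mk8, sub_eq_add_neg, CD.mul_re, CD.mul_im, CD.add_re, CD.add_im, CD.neg_re, CD.neg_im, CD.star_re, CD.star_im, CD.mk_re, CD.mk_im, CD.zero_re, CD.zero_im, star_trivial, neg_neg, mul_neg, neg_mul]
        linear_combination (a*c*u5*v7 + (-1)*a*c*u7*v5 + (-1)*c*u4*v6 + c*u6*v4) * h1 + (b*c*u6*v7 + (-1)*b*c*u7*v6 + c*u4*v5 + (-1)*c*u5*v4) * h2 + (c*u1*v6 + (-1)*c*u2*v5 + c*u5*v2 + (-1)*c*u6*v1) * h4 + ((-1)*a*c*u1*v7 + a*c*u7*v1 + c*u2*v4 + (-1)*c*u4*v2) * h5 + ((-1)*b*c*u2*v7 + b*c*u7*v2 + (-1)*c*u1*v4 + c*u4*v1) * h6 + (a*c*u1*v5 + (-1)*a*c*u5*v1 + b*c*u2*v6 + (-1)*b*c*u6*v2) * h7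
      · simp only [naAssociator, naCommutator, mk8, sub_eq_add_neg, CD.mul_re, CD.mul_im, CD.add_re, CD.add_im, CD.neg_re, CD.neg_im, CD.star_re, CD.star_im, CD.mk_re, CD.mk_im, CD.zero_re, CD.zero_im, star_trivial, neg_neg, mul_neg, neg_mul]
        linear_combination (a*b*u2*v7 + (-1)*a*b*u3*v6 + a*b*u6*v3 + (-1)*a*b*u7*v2) * h1 + ((-1)*a*b*u1*v7 + a*b*u3*v5 + (-1)*a*b*u5*v3 + a*b*u7*v1) * h2 + (a*b*u1*v6 + (-1)*a*b*u2*v5 + a*b*u5*v2 + (-1)*a*b*u6*v1) * h3 + (a*b*c*u6*v7 + (-1)*a*b*c*u7*v6 + a*b*u2*v3 + (-1)*a*b*u3*v2) * h5 + ((-1)*a*b*c*u5*v7 + a*b*c*u7*v5 + (-1)*a*b*u1*v3 + a*b*u3*v1) * h6 + (a*b*c*u5*v6 + (-1)*a*b*c*u6*v5 + a*b*u1*v2 + (-1)*a*b*u2*v1) * h7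
      · simp only [naAssociator, naCommutator, mk8, sub_eq_add_neg, CD.mul_re, CD.mul_im, CD.add_re, CD.add_im, CD.neg_re, CD.neg_im, CD.star_re, CD.star_im, CD.mk_re, CD.mk_im, CD.zero_re, CD.zero_im, star_trivial, neg_neg, mul_neg, neg_mul]
        linear_combination ((-1)*a*b*u3*v7 + a*b*u7*v3 + b*u2*v6 + (-1)*b*u6*v2) * h1 + ((-1)*b*u1*v6 + b*u3*v4 + (-1)*b*u4*v3 + b*u6*v1) * h2 + (a*b*u1*v7 + (-1)*a*b*u7*v1 + (-1)*b*u2*v4 + b*u4*v2) * h3 + (b*c*u6*v7 + (-1)*b*c*u7*v6 + b*u2*v3 + (-1)*b*u3*v2) * h4 + ((-1)*b*c*u4*v7 + b*c*u7*v4 + b*u1*v2 + (-1)*b*u2*v1) * h6 + ((-1)*a*b*u1*v3 + a*b*u3*v1 + b*c*u4*v6 + (-1)*b*c*u6*v4) * h7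
      · simp only [naAssociator, naCommutator, mk8, sub_eq_add_neg, CD.mul_re, CD.mul_im, CD.add_re, CD.add_im, CD.neg_re, CD.neg_im, CD.star_re, CD.star_im, CD.mk_re, CD.mk_im, CD.zero_re, CD.zero_im, star_trivial, neg_neg, mul_neg, neg_mul]
        linear_combination ((-1)*a*u2*v5 + (-1)*a*u3*v4 + a*u4*v3 + a*u5*v2) * h1 + ((-1)*a*b*u3*v7 + a*b*u7*v3 + a*u1*v5 + (-1)*a*u5*v1) * h2 + (a*b*u2*v7 + (-1)*a*b*u7*v2 + a*u1*v4 + (-1)*a*u4*v1) * h3 + ((-1)*a*c*u5*v7 + a*c*u7*v5 + (-1)*a*u1*v3 + a*u3*v1) * h4 + (a*c*u4*v7 + (-1)*a*c*u7*v4 + (-1)*a*u1*v2 + a*u2*v1) * h5 + ((-1)*a*b*u2*v3 + a*b*u3*v2 + (-1)*a*c*u4*v5 + a*c*u5*v4) * h7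
      · simp only [naAssociator, naCommutator, mk8, sub_eq_add_neg, CD.mul_re, CD.mul_im, CD.add_re, CD.add_im, CD.neg_re, CD.neg_im, CD.star_re, CD.star_im, CD.mk_re, CD.mk_im, CD.zero_re, CD.zero_im, star_trivial, neg_neg, mul_neg, neg_mul]
        linear_combination ((-1)*a*u3*v5 + a*u5*v3 + (-1)*u2*v4 + u4*v2) * h1 + ((-1)*b*u3*v6 + b*u6*v3 + u1*v4 + (-1)*u4*v1) * h2 + (a*u1*v5 + (-1)*a*u5*v1 + b*u2*v6 + (-1)*b*u6*v2) * h3 + ((-1)*c*u5*v6 + c*u6*v5 + (-1)*u1*v2 + u2*v1) * h4 + ((-1)*a*u1*v3 + a*u3*v1 + c*u4*v6 + (-1)*c*u6*v4) * h5 + ((-1)*b*u2*v3 + b*u3*v2 + (-1)*c*u4*v5 + c*u5*v4) * h6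
    · ext
      · simp only [naAssociator, naCommutator, mk8, sub_eq_add_neg, CD.mul_re, CD.mul_im, CD.add_re, CD.add_im, CD.neg_re, CD.neg_im, CD.star_re, CD.star_im, CD.mk_re, CD.mk_im, CD.zero_re, CD.zero_im, star_trivial, neg_neg, mul_neg, neg_mul]
        ring
      · simp only [naAssociator, naCommutator, mk8, sub_eq_add_neg, CD.mul_re, CD.mul_im, CD.add_re, CD.add_im, CD.neg_re, CD.neg_im, CD.star_re, CD.star_im, CD.mk_re, CD.mk_im, CD.zero_re, CD.zero_im, star_trivial, neg_neg, mul_neg, neg_mul]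
        linear_combination ((-1)*b*c*u4*v7 + b*c*u5*v6 + (-1)*b*c*u6*v5 + b*c*u7*v4) * h2 + ((-1)*a*b*c*u5*v7 + a*b*c*u7*v5 + b*c*u4*v6 + (-1)*b*c*u6*v4) * h3 + (b*c*u2*v7 + (-1)*b*c*u3*v6 + b*c*u6*v3 + (-1)*b*c*u7*v2) * h4 + (a*b*c*u3*v7 + (-1)*a*b*c*u7*v3 + (-1)*b*c*u2*v6 + b*c*u6*v2) * h5 + (b*c*u2*v5 + b*c*u3*v4 + (-1)*b*c*u4*v3 + (-1)*b*c*u5*v2) * h6 + ((-1)*a*b*c*u3*v5 + a*b*c*u5*v3 + (-1)*b*c*u2*v4 + b*c*u4*v2) * h7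
      · simp only [naAssociator, naCommutator, mk8, sub_eq_add_neg, CD.mul_re, CD.mul_im, CD.add_re, CD.add_im, CD.neg_re, CD.neg_im, CD.star_re, CD.star_im, CD.mk_re, CD.mk_im, CD.zero_re, CD.zero_im, star_trivial, neg_neg, mul_neg, neg_mul]
        linear_combination (a*c*u4*v7 + (-1)*a*c*u5*v6 + a*c*u6*v5 + (-1)*a*c*u7*v4) * h1 + ((-1)*a*b*c*u6*v7 + a*b*c*u7*v6 + (-1)*a*c*u4*v5 + a*c*u5*v4) * h3 + ((-1)*a*c*u1*v7 + a*c*u3*v5 + (-1)*a*c*u5*v3 + a*c*u7*v1) * h4 + (a*c*u1*v6 + (-1)*a*c*u3*v4 + a*c*u4*v3 + (-1)*a*c*u6*v1) * h5 + (a*b*c*u3*v7 + (-1)*a*b*c*u7*v3 + (-1)*a*c*u1*v5 + a*c*u5*v1) * h6 + ((-1)*a*b*c*u3*v6 + a*b*c*u6*v3 + a*c*u1*v4 + (-1)*a*c*u4*v1) * h7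
      · simp only [naAssociator, naCommutator, mk8, sub_eq_add_neg, CD.mul_re, CD.mul_im, CD.add_re, CD.add_im, CD.neg_re, CD.neg_im, CD.star_re, CD.star_im, CD.mk_re, CD.mk_im, CD.zero_re, CD.zero_im, star_trivial, neg_neg, mul_neg, neg_mul]
        linear_combination ((-1)*a*c*u5*v7 + a*c*u7*v5 + c*u4*v6 + (-1)*c*u6*v4) * h1 + ((-1)*b*c*u6*v7 + b*c*u7*v6 + (-1)*c*u4*v5 + c*u5*v4) * h2 + ((-1)*c*u1*v6 + c*u2*v5 + (-1)*c*u5*v2 + c*u6*v1) * h4 + (a*c*u1*v7 + (-1)*a*c*u7*v1 + (-1)*c*u2*v4 + c*u4*v2) * h5 + (b*c*u2*v7 + (-1)*b*c*u7*v2 + c*u1*v4 + (-1)*c*u4*v1) * h6 + ((-1)*a*c*u1*v5 + a*c*u5*v1 + (-1)*b*c*u2*v6 + b*c*u6*v2) * h7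
      · simp only [naAssociator, naCommutator, mk8, sub_eq_add_neg, CD.mul_re, CD.mul_im, CD.add_re, CD.add_im, CD.neg_re, CD.neg_im, CD.star_re, CD.star_im, CD.mk_re, CD.mk_im, CD.zero_re, CD.zero_im, star_trivial, neg_neg, mul_neg, neg_mul]
        linear_combination ((-1)*a*b*u2*v7 + a*b*u3*v6 + (-1)*a*b*u6*v3 + a*b*u7*v2) * h1 + (a*b*u1*v7 + (-1)*a*b*u3*v5 + a*b*u5*v3 + (-1)*a*b*u7*v1) * h2 + ((-1)*a*b*u1*v6 + a*b*u2*v5 + (-1)*a*b*u5*v2 + a*b*u6*v1) * h3 + ((-1)*a*b*c*u6*v7 + a*b*c*u7*v6 + (-1)*a*b*u2*v3 + a*b*u3*v2) * h5 + (a*b*c*u5*v7 + (-1)*a*b*c*u7*v5 + a*b*u1*v3 + (-1)*a*b*u3*v1) * h6 + ((-1)*a*b*c*u5*v6 + a*b*c*u6*v5 + (-1)*a*b*u1*v2 + a*b*u2*v1) * h7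
      · simp only [naAssociator, naCommutator, mk8, sub_eq_add_neg, CD.mul_re, CD.mul_im, CD.add_re, CD.add_im, CD.neg_re, CD.neg_im, CD.star_re, CD.star_im, CD.mk_re, CD.mk_im, CD.zero_re, CD.zero_im, star_trivial, neg_neg, mul_neg, neg_mul]
        linear_combination (a*b*u3*v7 + (-1)*a*b*u7*v3 + (-1)*b*u2*v6 + b*u6*v2) * h1 + (b*u1*v6 + (-1)*b*u3*v4 + b*u4*v3 + (-1)*b*u6*v1) * h2 + ((-1)*a*b*u1*v7 + a*b*u7*v1 + b*u2*v4 + (-1)*b*u4*v2) * h3 + ((-1)*b*c*u6*v7 + b*c*u7*v6 + (-1)*b*u2*v3 + b*u3*v2) * h4 + (b*c*u4*v7 + (-1)*b*c*u7*v4 + (-1)*b*u1*v2 + b*u2*v1) * h6 + (a*b*u1*v3 + (-1)*a*b*u3*v1 + (-1)*b*c*u4*v6 + b*c*u6*v4) * h7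
      · simp only [naAssociator, naCommutator, mk8, sub_eq_add_neg, CD.mul_re, CD.mul_im, CD.add_re, CD.add_im, CD.neg_re, CD.neg_im, CD.star_re, CD.star_im, CD.mk_re, CD.mk_im, CD.zero_re, CD.zero_im, star_trivial, neg_neg, mul_neg, neg_mul]
        linear_combination (a*u2*v5 + a*u3*v4 + (-1)*a*u4*v3 + (-1)*a*u5*v2) * h1 + (a*b*u3*v7 + (-1)*a*b*u7*v3 + (-1)*a*u1*v5 + a*u5*v1) * h2 + ((-1)*a*b*u2*v7 + a*b*u7*v2 + (-1)*a*u1*v4 + a*u4*v1) * h3 + (a*c*u5*v7 + (-1)*a*c*u7*v5 + a*u1*v3 + (-1)*a*u3*v1) * h4 + ((-1)*a*c*u4*v7 + a*c*u7*v4 + a*u1*v2 + (-1)*a*u2*v1) * h5 + (a*b*u2*v3 + (-1)*a*b*u3*v2 + a*c*u4*v5 + (-1)*a*c*u5*v4) * h7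
      · simp only [naAssociator, naCommutator, mk8, sub_eq_add_neg, CD.mul_re, CD.mul_im, CD.add_re, CD.add_im, CD.neg_re, CD.neg_im, CD.star_re, CD.star_im, CD.mk_re, CD.mk_im, CD.zero_re, CD.zero_im, star_trivial, neg_neg, mul_neg, neg_mul]
        linear_combination (a*u3*v5 + (-1)*a*u5*v3 + u2*v4 + (-1)*u4*v2) * h1 + (b*u3*v6 + (-1)*b*u6*v3 + (-1)*u1*v4 + u4*v1) * h2 + ((-1)*a*u1*v5 + a*u5*v1 + (-1)*b*u2*v6 + b*u6*v2) * h3 + (c*u5*v6 + (-1)*c*u6*v5 + u1*v2 + (-1)*u2*v1) * h4 + (a*u1*v3 + (-1)*a*u3*v1 + (-1)*c*u4*v6 + c*u6*v4) * h5 + (b*u2*v3 + (-1)*b*u3*v2 + c*u4*v5 + (-1)*c*u5*v4) * h6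
  · rintro ⟨⟨⟨u0,u1⟩,⟨u2,u3⟩⟩,⟨⟨u4,u5⟩,⟨u6,u7⟩⟩⟩
    ext
    · simp only [naAssociator, naCommutator, mk8, sub_eq_add_neg, CD.mul_re, CD.mul_im, CD.add_re, CD.add_im, CD.neg_re, CD.neg_im, CD.star_re, CD.star_im, CD.mk_re, CD.mk_im, CD.zero_re, CD.zero_im, star_trivial, neg_neg, mul_neg, neg_mul]
      ring
    · simp only [naAssociator, naCommutator, mk8, sub_eq_add_neg, CD.mul_re, CD.mul_im, CD.add_re, CD.add_im, CD.neg_re, CD.neg_im, CD.star_re, CD.star_im, CD.mk_re, CD.mk_im, CD.zero_re, CD.zero_im, star_trivial, neg_neg, mul_neg, neg_mul]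
      linear_combination (b*u3) * h2 + ((-1)*b*u2) * h3 + (c*u5) * h4 + ((-1)*c*u4) * h5 + (b*c*u7) * h6 + ((-1)*b*c*u6) * h7
    · simp only [naAssociator, naCommutator, mk8, sub_eq_add_neg, CD.mul_re, CD.mul_im, CD.add_re, CD.add_im, CD.neg_re, CD.neg_im, CD.star_re, CD.star_im, CD.mk_re, CD.mk_im, CD.zero_re, CD.zero_im, star_trivial, neg_neg, mul_neg, neg_mul]
      linear_combination ((-1)*a*u3) * h1 + (a*u1) * h3 + (c*u6) * h4 + ((-1)*a*c*u7) * h5 + ((-1)*c*u4) * h6 + (a*c*u5) * h7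
    · simp only [naAssociator, naCommutator, mk8, sub_eq_add_neg, CD.mul_re, CD.mul_im, CD.add_re, CD.add_im, CD.neg_re, CD.neg_im, CD.star_re, CD.star_im, CD.mk_re, CD.mk_im, CD.zero_re, CD.zero_im, star_trivial, neg_neg, mul_neg, neg_mul]
      linear_combination ((-1)*u2) * h1 + (u1) * h2 + (c*u7) * h4 + ((-1)*c*u6) * h5 + (c*u5) * h6 + ((-1)*c*u4) * h7
    · simp only [naAssociator, naCommutator, mk8, sub_eq_add_neg, CD.mul_re, CD.mul_im, CD.add_re, CD.add_im, CD.neg_re, CD.neg_im, CD.star_re, CD.star_im, CD.mk_re, CD.mk_im, CD.zero_re, CD.zero_im, star_trivial, neg_neg, mul_neg, neg_mul]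
      linear_combination ((-1)*a*u5) * h1 + ((-1)*b*u6) * h2 + (a*b*u7) * h3 + (a*u1) * h5 + (b*u2) * h6 + ((-1)*a*b*u3) * h7
    · simp only [naAssociator, naCommutator, mk8, sub_eq_add_neg, CD.mul_re, CD.mul_im, CD.add_re, CD.add_im, CD.neg_re, CD.neg_im, CD.star_re, CD.star_im, CD.mk_re, CD.mk_im, CD.zero_re, CD.zero_im, star_trivial, neg_neg, mul_neg, neg_mul]
      linear_combination ((-1)*u4) * h1 + ((-1)*b*u7) * h2 + (b*u6) * h3 + (u1) * h4 + ((-1)*b*u3) * h6 + (b*u2) * h7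
    · simp only [naAssociator, naCommutator, mk8, sub_eq_add_neg, CD.mul_re, CD.mul_im, CD.add_re, CD.add_im, CD.neg_re, CD.neg_im, CD.star_re, CD.star_im, CD.mk_re, CD.mk_im, CD.zero_re, CD.zero_im, star_trivial, neg_neg, mul_neg, neg_mul]
      linear_combination (a*u7) * h1 + ((-1)*u4) * h2 + ((-1)*a*u5) * h3 + (u2) * h4 + (a*u3) * h5 + ((-1)*a*u1) * h7
    · simp only [naAssociator, naCommutator, mk8, sub_eq_add_neg, CD.mul_re, CD.mul_im, CD.add_re, CD.add_im, CD.neg_re, CD.neg_im, CD.star_re, CD.star_im, CD.mk_re, CD.mk_im, CD.zero_re, CD.zero_im, star_trivial, neg_neg, mul_neg, neg_mul]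
      linear_combination (u6) * h1 + ((-1)*u5) * h2 + ((-1)*u4) * h3 + (u3) * h4 + (u2) * h5 + ((-1)*u1) * h6

set_option maxHeartbeats 1600000 in
theorem lemAssoc2 (a b c : K) (h2 : (2 : K) = 0) :
    ∀ x y z : CD (CD (CD K a) ⟨b, 0⟩) ⟨⟨c, 0⟩, 0⟩, x * y * z = x * (y * z) := by
  rintro ⟨⟨⟨x0,x1⟩,⟨x2,x3⟩⟩,⟨⟨x4,x5⟩,⟨x6,x7⟩⟩⟩ ⟨⟨⟨y0,y1⟩,⟨y2,y3⟩⟩,⟨⟨y4,y5⟩,⟨y6,y7⟩⟩⟩ ⟨⟨⟨w0,w1⟩,⟨w2,w3⟩⟩,⟨⟨w4,w5⟩,⟨w6,w7⟩⟩⟩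
  ext
  · simp only [naAssociator, naCommutator, mk8, sub_eq_add_neg, CD.mul_re, CD.mul_im, CD.add_re, CD.add_im, CD.neg_re, CD.neg_im, CD.star_re, CD.star_im, CD.mk_re, CD.mk_im, CD.zero_re, CD.zero_im, star_trivial, neg_neg, mul_neg, neg_mul]
    ring
  · simp only [naAssociator, naCommutator, mk8, sub_eq_add_neg, CD.mul_re, CD.mul_im, CD.add_re, CD.add_im, CD.neg_re, CD.neg_im, CD.star_re, CD.star_im, CD.mk_re, CD.mk_im, CD.zero_re, CD.zero_im, star_trivial, neg_neg, mul_neg, neg_mul]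
    linear_combination ((-1)*a*b*c*w3*x5*y7 + a*b*c*w3*x7*y5 + a*b*c*w5*x3*y7 + (-1)*a*b*c*w5*x7*y3 + (-1)*a*b*c*w7*x3*y5 + a*b*c*w7*x5*y3 + (-1)*b*c*w2*x4*y7 + b*c*w2*x5*y6 + (-1)*b*c*w2*x6*y5 + b*c*w2*x7*y4 + b*c*w3*x4*y6 + (-1)*b*c*w3*x6*y4 + b*c*w4*x2*y7 + (-1)*b*c*w4*x3*y6 + b*c*w4*x6*y3 + (-1)*b*c*w4*x7*y2 + (-1)*b*c*w5*x2*y6 + b*c*w5*x6*y2 + b*c*w6*x2*y5 + b*c*w6*x3*y4 + (-1)*b*c*w6*x4*y3 + (-1)*b*c*w6*x5*y2 + (-1)*b*c*w7*x2*y4 + b*c*w7*x4*y2) * h2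
  · simp only [naAssociator, naCommutator, mk8, sub_eq_add_neg, CD.mul_re, CD.mul_im, CD.add_re, CD.add_im, CD.neg_re, CD.neg_im, CD.star_re, CD.star_im, CD.mk_re, CD.mk_im, CD.zero_re, CD.zero_im, star_trivial, neg_neg, mul_neg, neg_mul]
    linear_combination ((-1)*a*b*c*w3*x6*y7 + a*b*c*w3*x7*y6 + a*b*c*w6*x3*y7 + (-1)*a*b*c*w6*x7*y3 + (-1)*a*b*c*w7*x3*y6 + a*b*c*w7*x6*y3 + a*c*w1*x4*y7 + (-1)*a*c*w1*x5*y6 + a*c*w1*x6*y5 + (-1)*a*c*w1*x7*y4 + (-1)*a*c*w3*x4*y5 + a*c*w3*x5*y4 + (-1)*a*c*w4*x1*y7 + a*c*w4*x3*y5 + (-1)*a*c*w4*x5*y3 + a*c*w4*x7*y1 + a*c*w5*x1*y6 + (-1)*a*c*w5*x3*y4 + a*c*w5*x4*y3 + (-1)*a*c*w5*x6*y1 + (-1)*a*c*w6*x1*y5 + a*c*w6*x5*y1 + a*c*w7*x1*y4 + (-1)*a*c*w7*x4*y1) * h2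
  · simp only [naAssociator, naCommutator, mk8, sub_eq_add_neg, CD.mul_re, CD.mul_im, CD.add_re, CD.add_im, CD.neg_re, CD.neg_im, CD.star_re, CD.star_im, CD.mk_re, CD.mk_im, CD.zero_re, CD.zero_im, star_trivial, neg_neg, mul_neg, neg_mul]
    linear_combination ((-1)*a*c*w1*x5*y7 + a*c*w1*x7*y5 + a*c*w5*x1*y7 + (-1)*a*c*w5*x7*y1 + (-1)*a*c*w7*x1*y5 + a*c*w7*x5*y1 + (-1)*b*c*w2*x6*y7 + b*c*w2*x7*y6 + b*c*w6*x2*y7 + (-1)*b*c*w6*x7*y2 + (-1)*b*c*w7*x2*y6 + b*c*w7*x6*y2 + c*w1*x4*y6 + (-1)*c*w1*x6*y4 + (-1)*c*w2*x4*y5 + c*w2*x5*y4 + (-1)*c*w4*x1*y6 + c*w4*x2*y5 + (-1)*c*w4*x5*y2 + c*w4*x6*y1 + (-1)*c*w5*x2*y4 + c*w5*x4*y2 + c*w6*x1*y4 + (-1)*c*w6*x4*y1) * h2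
  · simp only [naAssociator, naCommutator, mk8, sub_eq_add_neg, CD.mul_re, CD.mul_im, CD.add_re, CD.add_im, CD.neg_re, CD.neg_im, CD.star_re, CD.star_im, CD.mk_re, CD.mk_im, CD.zero_re, CD.zero_im, star_trivial, neg_neg, mul_neg, neg_mul]
    linear_combination ((-1)*a*b*c*w5*x6*y7 + a*b*c*w5*x7*y6 + a*b*c*w6*x5*y7 + (-1)*a*b*c*w6*x7*y5 + (-1)*a*b*c*w7*x5*y6 + a*b*c*w7*x6*y5 + (-1)*a*b*w1*x2*y7 + a*b*w1*x3*y6 + (-1)*a*b*w1*x6*y3 + a*b*w1*x7*y2 + a*b*w2*x1*y7 + (-1)*a*b*w2*x3*y5 + a*b*w2*x5*y3 + (-1)*a*b*w2*x7*y1 + (-1)*a*b*w3*x1*y6 + a*b*w3*x2*y5 + (-1)*a*b*w3*x5*y2 + a*b*w3*x6*y1 + (-1)*a*b*w5*x2*y3 + a*b*w5*x3*y2 + a*b*w6*x1*y3 + (-1)*a*b*w6*x3*y1 + (-1)*a*b*w7*x1*y2 + a*b*w7*x2*y1) * h2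
  · simp only [naAssociator, naCommutator, mk8, sub_eq_add_neg, CD.mul_re, CD.mul_im, CD.add_re, CD.add_im, CD.neg_re, CD.neg_im, CD.star_re, CD.star_im, CD.mk_re, CD.mk_im, CD.zero_re, CD.zero_im, star_trivial, neg_neg, mul_neg, neg_mul]
    linear_combination (a*b*w1*x3*y7 + (-1)*a*b*w1*x7*y3 + (-1)*a*b*w3*x1*y7 + a*b*w3*x7*y1 + a*b*w7*x1*y3 + (-1)*a*b*w7*x3*y1 + (-1)*b*c*w4*x6*y7 + b*c*w4*x7*y6 + b*c*w6*x4*y7 + (-1)*b*c*w6*x7*y4 + (-1)*b*c*w7*x4*y6 + b*c*w7*x6*y4 + (-1)*b*w1*x2*y6 + b*w1*x6*y2 + b*w2*x1*y6 + (-1)*b*w2*x3*y4 + b*w2*x4*y3 + (-1)*b*w2*x6*y1 + b*w3*x2*y4 + (-1)*b*w3*x4*y2 + (-1)*b*w4*x2*y3 + b*w4*x3*y2 + (-1)*b*w6*x1*y2 + b*w6*x2*y1) * h2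
  · simp only [naAssociator, naCommutator, mk8, sub_eq_add_neg, CD.mul_re, CD.mul_im, CD.add_re, CD.add_im, CD.neg_re, CD.neg_im, CD.star_re, CD.star_im, CD.mk_re, CD.mk_im, CD.zero_re, CD.zero_im, star_trivial, neg_neg, mul_neg, neg_mul]
    linear_combination (a*b*w2*x3*y7 + (-1)*a*b*w2*x7*y3 + (-1)*a*b*w3*x2*y7 + a*b*w3*x7*y2 + a*b*w7*x2*y3 + (-1)*a*b*w7*x3*y2 + a*c*w4*x5*y7 + (-1)*a*c*w4*x7*y5 + (-1)*a*c*w5*x4*y7 + a*c*w5*x7*y4 + a*c*w7*x4*y5 + (-1)*a*c*w7*x5*y4 + a*w1*x2*y5 + a*w1*x3*y4 + (-1)*a*w1*x4*y3 + (-1)*a*w1*x5*y2 + (-1)*a*w2*x1*y5 + a*w2*x5*y1 + (-1)*a*w3*x1*y4 + a*w3*x4*y1 + a*w4*x1*y3 + (-1)*a*w4*x3*y1 + a*w5*x1*y2 + (-1)*a*w5*x2*y1) * h2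
  · simp only [naAssociator, naCommutator, mk8, sub_eq_add_neg, CD.mul_re, CD.mul_im, CD.add_re, CD.add_im, CD.neg_re, CD.neg_im, CD.star_re, CD.star_im, CD.mk_re, CD.mk_im, CD.zero_re, CD.zero_im, star_trivial, neg_neg, mul_neg, neg_mul]
    linear_combination (a*w1*x3*y5 + (-1)*a*w1*x5*y3 + (-1)*a*w3*x1*y5 + a*w3*x5*y1 + a*w5*x1*y3 + (-1)*a*w5*x3*y1 + b*w2*x3*y6 + (-1)*b*w2*x6*y3 + (-1)*b*w3*x2*y6 + b*w3*x6*y2 + b*w6*x2*y3 + (-1)*b*w6*x3*y2 + c*w4*x5*y6 + (-1)*c*w4*x6*y5 + (-1)*c*w5*x4*y6 + c*w5*x6*y4 + c*w6*x4*y5 + (-1)*c*w6*x5*y4 + w1*x2*y4 + (-1)*w1*x4*y2 + (-1)*w2*x1*y4 + w2*x4*y1 + w4*x1*y2 + (-1)*w4*x2*y1) * h2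

open scoped Classical in
theorem lemE' {K : Type*} [CommRing K]
    (ess : ∀ x : K, x ≠ 0 → ∃ y : K, y * x ≠ 0 ∧ 2 * (y * x) = 0) :
    ∀ (n : ℕ) (f : Fin 8 → K), (Finset.univ.filter fun j => ¬ 2 * f j = 0).card ≤ n →
      (∃ j, f j ≠ 0) → ∃ u : K, (∃ j, u * f j ≠ 0) ∧ ∀ j, 2 * (u * f j) = 0 := by
  intro n
  induction n with
  | zero =>
    intro f hcard hne
    have hall : ∀ j, 2 * f j = 0 := by
      intro j; by_contra hj
      have hmem : j ∈ Finset.univ.filter (fun j => ¬ 2 * f j = 0) := by simpa using hj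
      have := Finset.card_pos.mpr ⟨j, hmem⟩
      omega
    exact ⟨1, by simpa using hne, fun j => by rw [one_mul]; exact hall j⟩
  | succ n ih =>
    intro f hcard hne
    by_cases hall : ∀ j, 2 * f j = 0
    · exact ⟨1, by simpa using hne, fun j => by rw [one_mul]; exact hall j⟩
    · push_neg at hall
      obtain ⟨i, hi⟩ := hall
      obtain ⟨y, hy1, hy2⟩ := ess _ hi
      have hsub : (Finset.univ.filter fun j => ¬ 2 * (2 * y * f j) = 0) ⊆
          (Finset.univ.filter fun j => ¬ 2 * f j = 0).erase i := by
        intro j hj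
        simp only [Finset.mem_filter, Finset.mem_univ, true_and, Finset.mem_erase] at hj ⊢
        constructor
        · rintro rfl; exact hj (by linear_combination hy2)
        · intro h0; exact hj (by linear_combination (2 * y) * h0)
      have hcard' : (Finset.univ.filter fun j => ¬ 2 * (2 * y * f j) = 0).card ≤ n := by
        have h1 := Finset.card_le_card hsub
        have h2 : i ∈ Finset.univ.filter fun j => ¬ 2 * f j = 0 := by simpa using hi
        have h3 := Finset.card_erase_of_mem h2
        have h4 := Finset.card_pos.mpr ⟨i, h2⟩
        omega
      obtain ⟨u, ⟨j, hj⟩, hu2⟩ := ih (fun j => 2 * y * f j) hcard'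
        ⟨i, fun h0 => hy1 (by linear_combination h0)⟩
      exact ⟨u * (2 * y), ⟨j, fun h0 => hj (by linear_combination h0)⟩,
        fun j => by linear_combination hu2 j⟩

theorem lemD {K : Type*} [CommRing K] [StarRing K] [TrivialStar K]
    {a b c : K} (ha : IsUnit a) (z0 z1 z2 z3 z4 z5 z6 z7 : K)
    (hz : mk8 a b c z0 z1 z2 z3 z4 z5 z6 z7 ∈
      ringCenter (CD (CD (CD K a) ⟨b, 0⟩) ⟨⟨c, 0⟩, 0⟩)) :
    2 * z1 = 0 ∧ 2 * z2 = 0 ∧ 2 * z3 = 0 ∧ 2 * z4 = 0 ∧ 2 * z5 = 0 ∧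
      2 * z6 = 0 ∧ 2 * z7 = 0 := by
  have hc1 := hz.2 (mk8 a b c 0 1 0 0 0 0 0 0)
  have hc2 := hz.2 (mk8 a b c 0 0 1 0 0 0 0 0)
  have g2 := congrArg (fun w : CD (CD (CD K a) ⟨b, 0⟩) ⟨⟨c, 0⟩, 0⟩ => w.re.im.re) hc1
  have g3 := congrArg (fun w : CD (CD (CD K a) ⟨b, 0⟩) ⟨⟨c, 0⟩, 0⟩ => w.re.im.im) hc1
  have g4 := congrArg (fun w : CD (CD (CD K a) ⟨b, 0⟩) ⟨⟨c, 0⟩, 0⟩ => w.im.re.re) hc1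
  have g5 := congrArg (fun w : CD (CD (CD K a) ⟨b, 0⟩) ⟨⟨c, 0⟩, 0⟩ => w.im.re.im) hc1
  have g6 := congrArg (fun w : CD (CD (CD K a) ⟨b, 0⟩) ⟨⟨c, 0⟩, 0⟩ => w.im.im.re) hc1
  have g7 := congrArg (fun w : CD (CD (CD K a) ⟨b, 0⟩) ⟨⟨c, 0⟩, 0⟩ => w.im.im.im) hc1
  have g1 := congrArg (fun w : CD (CD (CD K a) ⟨b, 0⟩) ⟨⟨c, 0⟩, 0⟩ => w.re.im.im) hc2
  simp only [naCommutator, mk8, sub_eq_add_neg, CD.mul_re, CD.mul_im, CD.add_re, CD.add_im,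
    CD.neg_re, CD.neg_im, CD.star_re, CD.star_im, CD.mk_re, CD.mk_im, CD.zero_re, CD.zero_im,
    star_trivial, neg_neg, mul_neg, neg_mul] at g1 g2 g3 g4 g5 g6 g7
  refine ⟨by linear_combination -g1, by linear_combination g3, ?_, by linear_combination g5,
    ?_, by linear_combination -g7, ?_⟩
  · exact (IsUnit.mul_right_eq_zero ha).mp (show a * (2 * z3) = 0 by linear_combination g2)
  · exact (IsUnit.mul_right_eq_zero ha).mp (show a * (2 * z5) = 0 by linear_combination g4)
  · exact (IsUnit.mul_right_eq_zero ha).mp (show a * (2 * z7) = 0 by linear_combination -g6)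

end Aux

set_option maxHeartbeats 3200000 in
theorem stmt15 {K : Type*} [CommRing K] [StarRing K] [TrivialStar K]
    {a b c : K} (ha : IsUnit a) (hb : IsUnit b) (hc : IsUnit c) :
    letI : StarRing (CD K a) := CD.starRing (fun t => mul_comm a t) (star_trivial a)
    letI : StarRing (CD (CD K a) ⟨b, 0⟩) :=
      CD.starRing (CD.mk_zero_comm (fun t => mul_comm b t) (star_trivial b))
        (by ext <;> first | exact star_trivial b | exact neg_zero)
    ((¬ ∀ x y z : CD (CD (CD K a) ⟨b, 0⟩) ⟨⟨c, 0⟩, 0⟩, x * y * z = x * (y * z)) ∧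
        IsCentrallyEssential (CD (CD (CD K a) ⟨b, 0⟩) ⟨⟨c, 0⟩, 0⟩)) ↔
      ((∀ x : K, x ≠ 0 → ∃ y : K, y * x ≠ 0 ∧ 2 * (y * x) = 0) ∧
        {x : K | 2 * x = 0} ≠ Set.univ) := by
  classical
  letI : StarRing (CD K a) := CD.starRing (fun t => mul_comm a t) (star_trivial a)
  letI : StarRing (CD (CD K a) ⟨b, 0⟩) :=
    CD.starRing (CD.mk_zero_comm (fun t => mul_comm b t) (star_trivial b)) (by ext <;> simp)
  constructor
  · rintro ⟨hna, hce⟩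
    constructor
    · intro x hx
      have hrne : (mk8 a b c 0 0 0 0 0 0 0 x : CD (CD (CD K a) ⟨b, 0⟩) ⟨⟨c, 0⟩, 0⟩) ≠ 0 :=
        fun h => hx (congrArg (fun w : CD (CD (CD K a) ⟨b, 0⟩) ⟨⟨c, 0⟩, 0⟩ => w.im.im.im) h)
      obtain ⟨z, hzC, hzr, hzrC⟩ := hce _ hrne
      obtain ⟨⟨⟨z0,z1⟩,⟨z2,z3⟩⟩,⟨⟨z4,z5⟩,⟨z6,z7⟩⟩⟩ := z
      obtain ⟨d1,d2,d3,d4,d5,d6,d7⟩ := lemD ha z0 z1 z2 z3 z4 z5 z6 z7 hzC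
      have hw : (⟨⟨⟨z0,z1⟩,⟨z2,z3⟩⟩,⟨⟨z4,z5⟩,⟨z6,z7⟩⟩⟩ : CD (CD (CD K a) ⟨b, 0⟩) ⟨⟨c, 0⟩, 0⟩) *
          mk8 a b c 0 0 0 0 0 0 0 x =
          mk8 a b c (a*b*c*(x*z7)) (b*c*(x*z6)) (-(a*c*(x*z5))) (c*(x*z4)) (a*b*(x*z3))
            (-(b*(x*z2))) (a*(x*z1)) (x*z0) := by
        ext <;> simp [mk8] <;> ring
      rw [hw] at hzr hzrC
      obtain ⟨-, -, -, -, -, -, e7'⟩ := lemD ha _ _ _ _ _ _ _ _ hzrC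
      by_cases k0 : a*b*c*(x*z7) = 0
      · by_cases k1 : b*c*(x*z6) = 0
        · by_cases k2 : a*c*(x*z5) = 0
          · by_cases k3 : c*(x*z4) = 0
            · by_cases k4 : a*b*(x*z3) = 0
              · by_cases k5 : b*(x*z2) = 0
                · by_cases k6 : a*(x*z1) = 0
                  · by_cases k7 : x*z0 = 0
                    · exact absurd (by ext <;> simp [mk8, k0, k1, k2, k3, k4, k5, k6, k7]) hzr
                    · exact ⟨z0, fun h => k7 (by linear_combination h),
                        by linear_combination e7'⟩
                  · exact ⟨a*z1, fun h => k6 (by linear_combination h),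
                      by linear_combination (a*x) * d1⟩
                · exact ⟨b*z2, fun h => k5 (by linear_combination h),
                    by linear_combination (b*x) * d2⟩
              · exact ⟨a*(b*z3), fun h => k4 (by linear_combination h),
                  by linear_combination (a*b*x) * d3⟩
            · exact ⟨c*z4, fun h => k3 (by linear_combination h),
                by linear_combination (c*x) * d4⟩
          · exact ⟨a*(c*z5), fun h => k2 (by linear_combination h),
              by linear_combination (a*c*x) * d5⟩
        · exact ⟨b*(c*z6), fun h => k1 (by linear_combination h),
            by linear_combination (b*c*x) * d6⟩
      · exact ⟨a*(b*(c*z7)), fun h => k0 (by linear_combination h),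
          by linear_combination (a*b*c*x) * d7⟩
    · intro hU
      apply hna
      have h1mem : (1:K) ∈ {x : K | 2 * x = 0} := by rw [hU]; trivial
      have h2 : (2:K) = 0 := by simpa using h1mem
      exact lemAssoc2 a b c h2
  · rintro ⟨hess, hne⟩
    have h2ne : (2:K) ≠ 0 := by
      intro h2
      exact hne (Set.eq_univ_iff_forall.mpr fun x => by simp [Set.mem_setOf_eq, h2])
    constructor
    · intro hassoc
      have hA := hassoc (mk8 a b c 0 0 0 0 1 0 0 0) (mk8 a b c 0 0 0 0 0 0 1 0)
        (mk8 a b c 0 0 0 0 0 0 0 1)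
      have h5 := congrArg (fun w : CD (CD (CD K a) ⟨b, 0⟩) ⟨⟨c, 0⟩, 0⟩ => w.im.re.im) hA
      simp only [mk8, CD.mul_re, CD.mul_im, CD.add_re, CD.add_im, CD.neg_re, CD.neg_im,
        CD.star_re, CD.star_im, CD.mk_re, CD.mk_im, CD.zero_re, CD.zero_im, star_trivial,
        neg_neg, mul_neg, neg_mul] at h5
      have hbc : (b * c) * 2 = 0 := by linear_combination -h5
      exact h2ne ((IsUnit.mul_right_eq_zero (hb.mul hc)).mp hbc)
    · intro r hr
      obtain ⟨⟨⟨r0,r1⟩,⟨r2,r3⟩⟩,⟨⟨r4,r5⟩,⟨r6,r7⟩⟩⟩ := r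
      have hfne : ∃ j : Fin 8, (![r0,r1,r2,r3,r4,r5,r6,r7] : Fin 8 → K) j ≠ 0 := by
        by_contra hco
        push_neg at hco
        refine absurd ?_ hr
        ext
        · exact hco 0
        · exact hco 1
        · exact hco 2
        · exact hco 3
        · exact hco 4
        · exact hco 5
        · exact hco 6
        · exact hco 7
      obtain ⟨u, ⟨j, huj⟩, hu2⟩ := lemE' hess 8 ![r0,r1,r2,r3,r4,r5,r6,r7]
        ((Finset.card_filter_le _ _).trans (le_of_eq (Finset.card_fin 8))) hfne
      have hzr : (mk8 a b c u 0 0 0 0 0 0 0 : CD (CD (CD K a) ⟨b, 0⟩) ⟨⟨c, 0⟩, 0⟩) *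
          ⟨⟨⟨r0,r1⟩,⟨r2,r3⟩⟩,⟨⟨r4,r5⟩,⟨r6,r7⟩⟩⟩ =
          mk8 a b c (u*r0) (u*r1) (u*r2) (u*r3) (u*r4) (u*r5) (u*r6) (u*r7) := by
        ext <;> simp [mk8] <;> ring
      refine ⟨mk8 a b c u 0 0 0 0 0 0 0,
        lemB a b c u 0 0 0 0 0 0 0 (mul_zero 2) (mul_zero 2) (mul_zero 2) (mul_zero 2)
          (mul_zero 2) (mul_zero 2) (mul_zero 2), ?_, ?_⟩
      · rw [hzr]
        intro h
        apply huj
        fin_cases j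
        · exact congrArg (fun w : CD (CD (CD K a) ⟨b, 0⟩) ⟨⟨c, 0⟩, 0⟩ => w.re.re.re) h
        · exact congrArg (fun w : CD (CD (CD K a) ⟨b, 0⟩) ⟨⟨c, 0⟩, 0⟩ => w.re.re.im) h
        · exact congrArg (fun w : CD (CD (CD K a) ⟨b, 0⟩) ⟨⟨c, 0⟩, 0⟩ => w.re.im.re) h
        · exact congrArg (fun w : CD (CD (CD K a) ⟨b, 0⟩) ⟨⟨c, 0⟩, 0⟩ => w.re.im.im) h
        · exact congrArg (fun w : CD (CD (CD K a) ⟨b, 0⟩) ⟨⟨c, 0⟩, 0⟩ => w.im.re.re) h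
        · exact congrArg (fun w : CD (CD (CD K a) ⟨b, 0⟩) ⟨⟨c, 0⟩, 0⟩ => w.im.re.im) h
        · exact congrArg (fun w : CD (CD (CD K a) ⟨b, 0⟩) ⟨⟨c, 0⟩, 0⟩ => w.im.im.re) h
        · exact congrArg (fun w : CD (CD (CD K a) ⟨b, 0⟩) ⟨⟨c, 0⟩, 0⟩ => w.im.im.im) h
      · rw [hzr]
        exact lemB a b c _ _ _ _ _ _ _ _ (hu2 1) (hu2 2) (hu2 3) (hu2 4) (hu2 5) (hu2 6) (hu2 7)
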